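/- For a, λ > 0: ∫₀^∞ (1 − e^{−λx}) e^{−ax} / x dx = log(1 + λ/a). -/

import Mathlib

open MeasureTheory Set Real

lemma exp_integral_aux (x : ℝ) (hx : x ≠ 0) (c d : ℝ) :
    ∫ t in c..d, Real.exp (-(t * x)) = (Real.exp (-(c * x)) - Real.exp (-(d * x))) / x := by
  have hD : ∀ t : ℝ, HasDerivAt (fun t => -Real.exp (-(t * x)) / x) (Real.exp (-(t * x))) t := by
    intro t
    have h1 : HasDerivAt (fun t : ℝ => -(t * x)) (-x) t :=
      by simpa [Pi.neg_def] using ((hasDerivAt_id t).mul_const x).neg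
    have h2 := (h1.exp).neg.div_const x
    refine h2.congr_deriv ?_
    field_simp
  rw [intervalIntegral.integral_eq_sub_of_hasDerivAt (fun t _ => hD t)
    ((Real.continuous_exp.comp (continuous_id.mul continuous_const).neg).intervalIntegrable c d)]
  field_simp
  ring

theorem frullani_exp (a l : ℝ) (ha : 0 < a) (hl : 0 < l) :
    ∫ x in Ioi (0:ℝ), (1 - Real.exp (-(l * x))) * Real.exp (-(a * x)) / x
      = Real.log (1 + l / a) := by
  have hal : 0 < a + l := by linarith
  set μ := (volume.restrict (Ioi (0:ℝ))).prod (volume.restrict (Ioc a (a + l))) with hμ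
  have hcont : Continuous (fun p : ℝ × ℝ => Real.exp (-(p.2 * p.1))) :=
    Real.continuous_exp.comp (continuous_snd.mul continuous_fst).neg
  have hint : Integrable (Function.uncurry fun x t => Real.exp (-(t * x))) μ := by
    have hg : Integrable (fun p : ℝ × ℝ => Real.exp (-a * p.1) * 1) μ :=
      Integrable.mul_prod (exp_neg_integrableOn_Ioi 0 ha)
        (integrableOn_const measure_Ioc_lt_top.ne)
    refine hg.mono hcont.aestronglyMeasurable ?_
    have hmem : ∀ᵐ p ∂μ, p ∈ (Ioi (0:ℝ)) ×ˢ (Ioc a (a + l)) := by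
      rw [hμ, Measure.prod_restrict]
      exact ae_restrict_mem (measurableSet_Ioi.prod measurableSet_Ioc)
    filter_upwards [hmem] with p hp
    simp only [Function.uncurry, Real.norm_eq_abs, abs_of_pos (Real.exp_pos _), mul_one,
      abs_of_pos (Real.exp_pos _)]
    apply Real.exp_le_exp.mpr
    have h1 : 0 < p.1 := hp.1
    have h2 : a ≤ p.2 := le_of_lt hp.2.1
    nlinarith
  have swap := integral_integral_swap hint
  have hLHS : (∫ x in Ioi (0:ℝ), ∫ t in Ioc a (a + l), Real.exp (-(t * x)))
      = ∫ x in Ioi (0:ℝ), (1 - Real.exp (-(l * x))) * Real.exp (-(a * x)) / x := by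
    refine setIntegral_congr_fun measurableSet_Ioi fun x hx => ?_
    have hx' : (0:ℝ) < x := hx
    rw [← intervalIntegral.integral_of_le (by linarith : a ≤ a + l),
      exp_integral_aux x hx'.ne' a (a + l)]
    rw [show -((a + l) * x) = -(a * x) + -(l * x) by ring, Real.exp_add]
    ring
  have hRHS : (∫ t in Ioc a (a + l), ∫ x in Ioi (0:ℝ), Real.exp (-(t * x)))
      = Real.log (1 + l / a) := by
    have hinner : ∀ t ∈ Ioc a (a + l),
        (∫ x in Ioi (0:ℝ), Real.exp (-(t * x))) = 1 / t := by
      intro t ht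
      have ht' : 0 < t := lt_trans ha ht.1
      have := integral_comp_mul_left_Ioi (fun s => Real.exp (-s)) 0 ht'
      simp only [mul_zero, integral_exp_neg_Ioi_zero, smul_eq_mul, mul_one] at this
      rw [this, one_div]
    rw [setIntegral_congr_fun measurableSet_Ioc hinner,
      ← intervalIntegral.integral_of_le (by linarith : a ≤ a + l),
      integral_one_div_of_pos ha hal]
    congr 1
    field_simp
  rw [← hLHS, swap, hRHS]
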